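/- Let W : ℝ → ℝ be a C¹, 1-periodic, even function with Lipschitz derivative, ‖W'‖_∞ = 1 and zero average. Let γ > 0, T > 0, N ≥ 1 and let (a_n)_{n≥1} be an N-periodic sequence of positive reals. Let (y_n) be a solution of the rescaled scheme from y₀ (with unique minimizers at each step). Then the limit f_γ(T,(a_n)) := lim_{n→∞} (y₀ − y_n)/n exists and is nonnegative; it does not depend on the initial datum y₀ (any two such solutions starting from different initial data give the same limit); and T ↦ f_γ(T,(a_n)) is nondecreasing. -/

import Mathlib

open Filter

/-- `(y n)` is a solution of the rescaled scheme: at each step `n ≥ 1`, `y n` is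
the unique minimizer over `ℝ` of `t ↦ W t + T t + a_n (γ/2)(t - y_{n-1})²`. -/
def IsRescaledSol (W : ℝ → ℝ) (T γ : ℝ) (a : ℕ → ℝ) (y : ℕ → ℝ) : Prop :=
  ∀ n : ℕ, 1 ≤ n →
    (∀ t : ℝ, W (y n) + T * y n + a n * (γ / 2) * (y n - y (n - 1)) ^ 2 ≤
      W t + T * t + a n * (γ / 2) * (t - y (n - 1)) ^ 2) ∧
    (∀ t : ℝ, (∀ s : ℝ, W t + T * t + a n * (γ / 2) * (t - y (n - 1)) ^ 2 ≤
      W s + T * s + a n * (γ / 2) * (s - y (n - 1)) ^ 2) → t = y n)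

section aux
variable {W : ℝ → ℝ} {T S γ A : ℝ} {a : ℕ → ℝ} {N : ℕ}

lemma cmp_step (hγ : 0 < γ) (hA : 0 < A) (hTS : T ≤ S) {p q u v : ℝ} (hpq : q ≤ p)
    (hu : ∀ t, W u + T * u + A * (γ/2) * (u - p) ^ 2 ≤ W t + T * t + A * (γ/2) * (t - p) ^ 2)
    (hv : ∀ t, W v + S * v + A * (γ/2) * (v - q) ^ 2 ≤ W t + S * t + A * (γ/2) * (t - q) ^ 2)
    (hvu : ∀ t, (∀ s, W t + S * t + A * (γ/2) * (t - q) ^ 2 ≤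
      W s + S * s + A * (γ/2) * (s - q) ^ 2) → t = v) :
    v ≤ u := by
  by_contra hlt
  push_neg at hlt
  have h1 := hu v
  have h2 := hv u
  have key : 0 ≤ (S - T) * (u - v) + A * γ * (u - v) * (p - q) := by nlinarith
  have e1 : (S - T) * (u - v) ≤ 0 :=
    mul_nonpos_of_nonneg_of_nonpos (by linarith) (by linarith)
  have e2 : A * γ * (u - v) * (p - q) ≤ 0 := by
    have h3 : A * γ * (u - v) ≤ 0 :=
      mul_nonpos_of_nonneg_of_nonpos (mul_pos hA hγ).le (by linarith)
    exact mul_nonpos_of_nonpos_of_nonneg h3 (by linarith)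
  have hST : S = T := by
    have h0 : (S - T) * (u - v) = 0 := by linarith
    rcases mul_eq_zero.1 h0 with h | h
    · linarith
    · exfalso; linarith
  have hpq' : p = q := by
    have h0 : A * γ * (u - v) * (p - q) = 0 := by linarith
    rcases mul_eq_zero.1 h0 with h | h
    · exfalso
      rcases mul_eq_zero.1 h with h' | h'
      · nlinarith
      · linarith
    · linarith
  have := hvu u (by
    intro s
    rw [hST, ← hpq']
    exact hu s)
  exact absurd this (ne_of_lt hlt)

lemma orbit_cmp (hγ : 0 < γ) (ha : ∀ n, 0 < a n) (hTS : T ≤ S) {y z : ℕ → ℝ}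
    (hy : IsRescaledSol W T γ a y) (hz : IsRescaledSol W S γ a z)
    (h0 : z 0 ≤ y 0) : ∀ n, z n ≤ y n := by
  intro n
  induction n with
  | zero => exact h0
  | succ n ih =>
    have hy' := hy (n+1) (by omega)
    have hz' := hz (n+1) (by omega)
    simp only [Nat.add_sub_cancel] at hy' hz'
    exact cmp_step hγ (ha (n+1)) hTS ih hy'.1 hz'.1 hz'.2

lemma shift_sol (hWper : Function.Periodic W 1) {y : ℕ → ℝ}
    (hy : IsRescaledSol W T γ a y) (k : ℤ) :
    IsRescaledSol W T γ a (fun n => y n + k) := by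
  have hW : ∀ (x : ℝ), W (x + k) = W x := by
    intro x
    simpa using (hWper.int_mul k) x
  intro n hn
  obtain ⟨hmin, huniq⟩ := hy n hn
  constructor
  · intro t
    have h := hmin (t - k)
    have e1 : W (y n + k) = W (y n) := hW _
    have e2 : W t = W (t - k) := by
      rw [← hW (t - k)]
      norm_num
    simp only []
    rw [e1, e2]
    nlinarith [h]
  · intro t ht
    have h : t - k = y n := by
      apply huniq
      intro s
      have h2 := ht (s + k)
      have e2 : W t = W (t - k) := by
        rw [← hW (t - k)]; norm_num
      rw [e2, hW s] at h2
      nlinarith [h2]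
    simp only []
    linarith [h]

lemma aper_mul (haper : ∀ n : ℕ, a (n + N) = a n) : ∀ m n : ℕ, a (n + m * N) = a n := by
  intro m
  induction m with
  | zero => simp
  | succ m ih =>
    intro n
    have e : n + (m+1) * N = (n + m * N) + N := by ring
    rw [e, haper, ih]

lemma shiftN_sol (haper : ∀ n : ℕ, a (n + N) = a n) {y : ℕ → ℝ}
    (hy : IsRescaledSol W T γ a y) (m : ℕ) :
    IsRescaledSol W T γ a (fun n => y (n + m * N)) := by
  intro n hn
  have hy' := hy (n + m * N) (by omega)
  have e : n + m * N - 1 = (n - 1) + m * N := by omega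
  rw [e, aper_mul haper m n] at hy'
  exact hy'

lemma key_ineq (hWper : Function.Periodic W 1) (hγ : 0 < γ) (ha : ∀ n, 0 < a n)
    (hTS : T ≤ S) {y z : ℕ → ℝ} (hy : IsRescaledSol W T γ a y)
    (hz : IsRescaledSol W S γ a z) :
    ∀ n, y 0 - y n - 1 ≤ z 0 - z n := by
  intro n
  set k : ℤ := ⌈z 0 - y 0⌉ with hk
  have h0 : z 0 ≤ y 0 + k := by
    have := Int.le_ceil (z 0 - y 0)
    linarith
  have hcmp := orbit_cmp hγ ha hTS (shift_sol hWper hy k) hz h0 n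
  have hk1 : (k : ℝ) < z 0 - y 0 + 1 := Int.ceil_lt_add_one _
  have hcmp : z n ≤ y n + k := hcmp
  linarith

end aux

section aux2
variable {W : ℝ → ℝ} {T γ : ℝ} {a : ℕ → ℝ} {N : ℕ}

lemma W_bdd (hWc : Continuous W) (hWper : Function.Periodic W 1) :
    ∃ B : ℝ, 0 ≤ B ∧ ∀ x, |W x| ≤ B := by
  obtain ⟨B, hB⟩ := (isCompact_Icc (a := (0:ℝ)) (b := 1)).exists_bound_of_continuousOn
    hWc.continuousOn
  refine ⟨max B 0, le_max_right _ _, fun x => ?_⟩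
  have hfr : W (Int.fract x) = W x := by
    have h := hWper.sub_int_mul_eq (x := x) (n := ⌊x⌋)
    rw [mul_one] at h
    exact h
  have h1 : Int.fract x ∈ Set.Icc (0:ℝ) 1 :=
    ⟨Int.fract_nonneg x, (Int.fract_lt_one x).le⟩
  have := hB _ h1
  rw [Real.norm_eq_abs, hfr] at this
  exact this.trans (le_max_left _ _)

lemma a_lb (hN : 1 ≤ N) (ha : ∀ n, 0 < a n) (haper : ∀ n : ℕ, a (n + N) = a n) :
    ∃ c : ℝ, 0 < c ∧ ∀ n, c ≤ a n := by
  have hne : (Finset.range N).Nonempty := ⟨0, Finset.mem_range.2 (by omega)⟩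
  refine ⟨(Finset.range N).inf' hne a, ?_, fun n => ?_⟩
  · rw [Finset.lt_inf'_iff]
    exact fun i _ => ha i
  · have hmod : a n = a (n % N) := by
      conv_lhs => rw [← Nat.mod_add_div' n N]
      exact aper_mul haper (n / N) (n % N)
    rw [hmod]
    exact Finset.inf'_le a (Finset.mem_range.2 (Nat.mod_lt n (by omega)))

lemma step_bdd {y : ℕ → ℝ} (hy : IsRescaledSol W T γ a y) (hγ : 0 < γ) (hT : 0 < T)
    {B c : ℝ} (hB : 0 ≤ B) (hWb : ∀ x, |W x| ≤ B) (hc : 0 < c) (hca : ∀ n, c ≤ a n) :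
    ∀ n, |y (n+1) - y n| ≤ (4*B + 2*T) / (c*γ) + 1 := by
  intro n
  have h := (hy (n+1) (by omega)).1 (y n)
  simp only [Nat.add_sub_cancel] at h
  set d := |y (n+1) - y n| with hd
  have hd0 : 0 ≤ d := abs_nonneg _
  have hsq : (y (n+1) - y n)^2 = d^2 := (sq_abs _).symm
  have hWy : W (y n) - W (y (n+1)) ≤ 2*B := by
    have := hWb (y n); have := hWb (y (n+1))
    cases abs_le.1 (hWb (y n)); cases abs_le.1 (hWb (y (n+1))); linarith
  have hTd : T * (y n - y (n+1)) ≤ T * d := by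
    apply mul_le_mul_of_nonneg_left _ hT.le
    calc y n - y (n+1) ≤ |y n - y (n+1)| := le_abs_self _
    _ = d := by rw [abs_sub_comm]
  have hkey : c * (γ/2) * d^2 ≤ 2*B + T*d := by
    have hz : (y n - y n)^2 = 0 := by ring
    rw [hz, mul_zero, hsq] at h
    have h2 : a (n+1) * (γ/2) * d^2 ≤ 2*B + T*d := by linarith
    have : c * (γ/2) * d^2 ≤ a (n+1) * (γ/2) * d^2 := by
      apply mul_le_mul_of_nonneg_right _ (sq_nonneg d)
      exact mul_le_mul_of_nonneg_right (hca (n+1)) (by linarith)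
    linarith
  by_contra hcon
  push_neg at hcon
  have hcg : 0 < c * γ := mul_pos hc hγ
  have hd1 : 1 ≤ d := by
    have : 0 ≤ (4*B + 2*T) / (c*γ) := by positivity
    linarith
  have hQ : c * γ * ((4*B + 2*T) / (c*γ)) = 4*B + 2*T := by
    field_simp
  have h5 : 4*B + 2*T + c*γ < c*γ*d := by
    have := mul_lt_mul_of_pos_left hcon hcg
    rw [mul_add, hQ, mul_one] at this
    linarith
  have h6 : (4*B + 2*T + c*γ) * d < c*γ*d*d :=
    mul_lt_mul_of_pos_right h5 (by linarith)
  nlinarith [hkey, h6, mul_nonneg hB (by linarith : (0:ℝ) ≤ d - 1),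
    mul_nonneg hcg.le (by linarith : (0:ℝ) ≤ d - 1)]

lemma drift_bdd {y : ℕ → ℝ} (hy : IsRescaledSol W T γ a y) (hγ : 0 < γ)
    (ha : ∀ n, 0 < a n) :
    ∀ m, T * (y m - y 0) ≤ W (y 0) - W (y m) := by
  intro m
  induction m with
  | zero => simp
  | succ m ih =>
    have h := (hy (m+1) (by omega)).1 (y m)
    simp only [Nat.add_sub_cancel] at h
    have hq : 0 ≤ a (m+1) * (γ/2) * (y (m+1) - y m)^2 :=
      mul_nonneg (mul_nonneg (ha (m+1)).le (by linarith)) (sq_nonneg _)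
    have hz : (y m - y m)^2 = 0 := by ring
    rw [hz, mul_zero] at h
    linarith

lemma lim_le {y z : ℕ → ℝ} {L M : ℝ} (h : ∀ n, y 0 - y n - 1 ≤ z 0 - z n)
    (hL : Tendsto (fun n : ℕ => (y 0 - y n) / (n : ℝ)) atTop (nhds L))
    (hM : Tendsto (fun n : ℕ => (z 0 - z n) / (n : ℝ)) atTop (nhds M)) : L ≤ M := by
  have h1 : Tendsto (fun n : ℕ => (y 0 - y n) / (n : ℝ) - 1 / n) atTop (nhds (L - 0)) :=
    hL.sub tendsto_one_div_atTop_nhds_zero_nat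
  rw [sub_zero] at h1
  apply le_of_tendsto_of_tendsto h1 hM
  filter_upwards [eventually_ge_atTop 1] with n hn
  have hn' : (0:ℝ) < n := by exact_mod_cast Nat.pos_of_ne_zero (by omega)
  rw [div_sub_div_same]
  exact (div_le_div_iff_of_pos_right hn').2 (h n)

lemma exists_tendsto (hWper : Function.Periodic W 1) (hWc : Continuous W)
    (hγ : 0 < γ) (hT : 0 < T) (hN : 1 ≤ N) (ha : ∀ n, 0 < a n)
    (haper : ∀ n : ℕ, a (n + N) = a n) {y : ℕ → ℝ} (hy : IsRescaledSol W T γ a y) :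
    ∃ L : ℝ, 0 ≤ L ∧ Tendsto (fun n : ℕ => (y 0 - y n) / (n : ℝ)) atTop (nhds L) := by
  obtain ⟨B, hB, hWb⟩ := W_bdd hWc hWper
  obtain ⟨c, hc, hca⟩ := a_lb hN ha haper
  set C : ℝ := (4*B + 2*T) / (c*γ) + 1 with hC
  have hC0 : 0 ≤ C := by positivity
  have hstep := step_bdd hy hγ hT hB hWb hc hca
  set u : ℕ → ℝ := fun m => y 0 - y (m * N) with hu
  -- almost additivity
  have halm : ∀ m p : ℕ, u p - 1 ≤ u (m + p) - u m ∧ u (m + p) - u m ≤ u p + 1 := by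
    intro m p
    have hz : IsRescaledSol W T γ a (fun n => y (n + m * N)) := shiftN_sol haper hy m
    have e : p * N + m * N = (m + p) * N := by ring
    have h1 := key_ineq hWper hγ ha le_rfl hy hz (p * N)
    have h2 := key_ineq hWper hγ ha le_rfl hz hy (p * N)
    simp only [Nat.zero_add, zero_add, e] at h1 h2
    constructor
    · simp only [hu]; linarith
    · simp only [hu]; linarith
  have hu0 : u 0 = 0 := by simp [hu]
  have hsub : Subadditive (fun m => u m + 1) := by
    intro m p
    show u (m + p) + 1 ≤ (u m + 1) + (u p + 1)
    have := (halm m p).2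
    linarith
  have hlow : ∀ m : ℕ, 1 ≤ m → (m : ℝ) * (u 1 - 1) ≤ u m - 1 := by
    intro m hm
    induction m with
    | zero => omega
    | succ m ih =>
      rcases Nat.eq_or_lt_of_le hm with h | h
      · simp [← h]
      · have hm1 : 1 ≤ m := by omega
        have := (halm m 1).1
        have := ih hm1
        push_cast
        nlinarith
  have hbdd : BddBelow (Set.range fun m : ℕ => (u m + 1) / (m : ℝ)) := by
    refine ⟨min 0 (u 1 - 1), ?_⟩
    rintro x ⟨m, rfl⟩
    rcases Nat.eq_zero_or_pos m with h | h
    · simp [h, hu0]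
    · have hm' : (0:ℝ) < m := by exact_mod_cast h
      have h1 := hlow m h
      have : (u 1 - 1) ≤ (u m + 1) / m := by
        rw [le_div_iff₀ hm']
        nlinarith
      exact le_trans (min_le_right _ _) this
  set ℓ : ℝ := hsub.lim with hℓ
  have htend1 : Tendsto (fun m : ℕ => (u m + 1) / (m : ℝ)) atTop (nhds ℓ) :=
    hsub.tendsto_lim hbdd
  have hulim : Tendsto (fun m : ℕ => u m / (m : ℝ)) atTop (nhds ℓ) := by
    have he : (fun m : ℕ => u m / (m : ℝ)) = fun m : ℕ => (u m + 1) / m - 1 / m := by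
      funext m
      rw [add_div]
      ring
    rw [he]
    simpa using htend1.sub tendsto_one_div_atTop_nhds_zero_nat
  -- step increments
  have hinc : ∀ k j : ℕ, |y (k + j) - y k| ≤ j * C := by
    intro k j
    induction j with
    | zero => simp
    | succ j ih =>
      have h1 := hstep (k + j)
      calc |y (k + (j+1)) - y k| = |(y (k + j + 1) - y (k + j)) + (y (k + j) - y k)| := by
            ring_nf
      _ ≤ |y (k + j + 1) - y (k + j)| + |y (k + j) - y k| := abs_add_le _ _
      _ ≤ C + j * C := add_le_add h1 ih
      _ = ((j + 1 : ℕ) : ℝ) * C := by push_cast; ring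
  have hrem : ∀ n : ℕ, |y (n / N * N) - y n| ≤ N * C := by
    intro n
    have e : n / N * N + n % N = n := Nat.div_add_mod' n N
    have h1 := hinc (n / N * N) (n % N)
    rw [e] at h1
    rw [abs_sub_comm] at h1
    have h2 : ((n % N : ℕ) : ℝ) * C ≤ (N:ℝ) * C := by
      have h3 : (n % N : ℕ) ≤ N := (Nat.mod_lt n (by omega)).le
      have h4 : ((n % N : ℕ) : ℝ) ≤ (N:ℝ) := by exact_mod_cast h3
      nlinarith
    exact h1.trans h2
  -- B part tends to zero
  have hBf : Tendsto (fun n : ℕ => (y (n / N * N) - y n) / (n : ℝ)) atTop (nhds 0) := by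
    apply tendsto_of_tendsto_of_tendsto_of_le_of_le'
      (tendsto_const_div_atTop_nhds_zero_nat (-(N * C)))
      (tendsto_const_div_atTop_nhds_zero_nat (N * C))
    · filter_upwards [eventually_ge_atTop 1] with n hn
      have hn' : (0:ℝ) < n := by exact_mod_cast Nat.pos_of_ne_zero (by omega)
      rw [neg_div]
      rw [neg_le, ← neg_div]
      apply (div_le_div_iff_of_pos_right hn').2
      have := abs_le.1 (hrem n)
      linarith
    · filter_upwards [eventually_ge_atTop 1] with n hn
      have hn' : (0:ℝ) < n := by exact_mod_cast Nat.pos_of_ne_zero (by omega)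
      apply (div_le_div_iff_of_pos_right hn').2
      have := abs_le.1 (hrem n)
      linarith
  -- ratio tends to 1/N
  have hN' : (0:ℝ) < N := by exact_mod_cast hN
  have hratio : Tendsto (fun n : ℕ => ((n / N : ℕ) : ℝ) / (n : ℝ)) atTop (nhds (1 / N)) := by
    have hlo : Tendsto (fun n : ℕ => 1 / (N:ℝ) - 1 / (n:ℝ)) atTop (nhds (1 / N)) := by
      simpa using (tendsto_const_nhds (x := 1 / (N:ℝ))).sub
        tendsto_one_div_atTop_nhds_zero_nat
    apply tendsto_of_tendsto_of_tendsto_of_le_of_le' hlo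
      (tendsto_const_nhds (x := 1 / (N:ℝ)))
    · filter_upwards [eventually_ge_atTop 1] with n hn
      have hn' : (0:ℝ) < n := by exact_mod_cast Nat.pos_of_ne_zero (by omega)
      have h2 : (n:ℝ) < ((n / N : ℕ) : ℝ) * N + N := by
        have h3 : n < n / N * N + N := by
          calc n = n / N * N + n % N := (Nat.div_add_mod' n N).symm
          _ < n / N * N + N := Nat.add_lt_add_left (Nat.mod_lt n (by omega)) _
        exact_mod_cast h3
      rw [sub_le_iff_le_add, ← add_div, div_le_div_iff₀ hN' hn']
      nlinarith
    · filter_upwards [eventually_ge_atTop 1] with n hn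
      have hn' : (0:ℝ) < n := by exact_mod_cast Nat.pos_of_ne_zero (by omega)
      have h2 : ((n / N : ℕ) : ℝ) * N ≤ n := by exact_mod_cast Nat.div_mul_le_self n N
      rw [div_le_div_iff₀ hn' hN']
      nlinarith
  -- A part
  have hdivN : Tendsto (fun n : ℕ => n / N) atTop atTop := by
    apply tendsto_atTop_atTop.2
    intro b
    exact ⟨b * N, fun n hn => (Nat.le_div_iff_mul_le (by omega)).2 hn⟩
  have hA : Tendsto (fun n : ℕ => (y 0 - y (n / N * N)) / (n : ℝ)) atTop (nhds (ℓ / N)) := by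
    have hprod : Tendsto
        (fun n : ℕ => (u (n / N) / ((n / N : ℕ) : ℝ)) * (((n / N : ℕ) : ℝ) / n))
        atTop (nhds (ℓ * (1 / N))) :=
      (hulim.comp hdivN).mul hratio
    have heq : (fun n : ℕ => (u (n / N) / ((n / N : ℕ) : ℝ)) * (((n / N : ℕ) : ℝ) / n))
        =ᶠ[atTop] fun n : ℕ => (y 0 - y (n / N * N)) / (n : ℝ) := by
      filter_upwards [eventually_ge_atTop N] with n hn
      have hm : 1 ≤ n / N := (Nat.le_div_iff_mul_le (by omega)).2 (by omega)
      have hm' : ((n / N : ℕ) : ℝ) ≠ 0 := by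
        have h0 : 0 < n / N := hm
        exact_mod_cast h0.ne'
      have hn0 : (n:ℝ) ≠ 0 := by
        have h0 : 0 < n := by omega
        exact_mod_cast h0.ne'
      have he2 : u (n / N) / ((n / N : ℕ) : ℝ) * (((n / N : ℕ) : ℝ) / n)
          = u (n / N) / n := by
        field_simp
      rw [he2]
    have : ℓ * (1 / N) = ℓ / N := by ring
    rw [this] at hprod
    exact hprod.congr' heq
  -- combine
  have hf : Tendsto (fun n : ℕ => (y 0 - y n) / (n : ℝ)) atTop (nhds (ℓ / N + 0)) := by
    have he : (fun n : ℕ => (y 0 - y n) / (n : ℝ)) =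
        fun n : ℕ => (y 0 - y (n / N * N)) / (n : ℝ) + (y (n / N * N) - y n) / n := by
      funext n
      rw [← add_div]
      ring_nf
    rw [he]
    exact hA.add hBf
  rw [add_zero] at hf
  refine ⟨ℓ / N, ?_, hf⟩
  -- nonnegativity
  have hdrift := drift_bdd hy hγ ha
  have hg : Tendsto (fun n : ℕ => (-(2 * B / T)) / (n : ℝ)) atTop (nhds 0) :=
    tendsto_const_div_atTop_nhds_zero_nat _
  apply le_of_tendsto_of_tendsto hg hf
  filter_upwards [eventually_ge_atTop 1] with n hn
  have hn' : (0:ℝ) < n := by exact_mod_cast Nat.pos_of_ne_zero (by omega)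
  apply (div_le_div_iff_of_pos_right hn').2
  have h1 := hdrift n
  have h2 := abs_le.1 (hWb (y 0))
  have h3 := abs_le.1 (hWb (y n))
  have h4 : y n - y 0 ≤ 2 * B / T := by
    rw [le_div_iff₀ hT]
    nlinarith
  linarith

end aux2


/-- Existence of the homogenized velocity `f_γ(T,(a_n)) = lim (y₀ - y_n)/n ≥ 0` for
`N`-periodic perturbations, its independence of the initial datum, and its
monotonicity in `T`. -/
theorem stmt_13 (W : ℝ → ℝ)
    (hWC1 : ContDiff ℝ 1 W)
    (hWper : Function.Periodic W 1)
    (hWeven : ∀ s : ℝ, W (-s) = W s)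
    (hWlip : ∃ L : NNReal, LipschitzWith L (deriv W))
    (hWnorm : sSup (Set.range fun s : ℝ => |deriv W s|) = 1)
    (hWavg : ∫ s in (0:ℝ)..1, W s = 0)
    (γ : ℝ) (hγ : 0 < γ) (N : ℕ) (hN : 1 ≤ N)
    (a : ℕ → ℝ) (ha : ∀ n, 0 < a n) (haper : ∀ n : ℕ, a (n + N) = a n) :
    (∀ T : ℝ, 0 < T → ∀ y : ℕ → ℝ, IsRescaledSol W T γ a y →
      ∃ L : ℝ, 0 ≤ L ∧
        Tendsto (fun n : ℕ => (y 0 - y n) / (n : ℝ)) atTop (nhds L)) ∧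
    (∀ T : ℝ, 0 < T → ∀ y y' : ℕ → ℝ, IsRescaledSol W T γ a y →
      IsRescaledSol W T γ a y' → ∀ L L' : ℝ,
        Tendsto (fun n : ℕ => (y 0 - y n) / (n : ℝ)) atTop (nhds L) →
        Tendsto (fun n : ℕ => (y' 0 - y' n) / (n : ℝ)) atTop (nhds L') → L = L') ∧
    (∀ T S : ℝ, 0 < T → T ≤ S → ∀ y z : ℕ → ℝ, IsRescaledSol W T γ a y →
      IsRescaledSol W S γ a z → ∀ L M : ℝ,
        Tendsto (fun n : ℕ => (y 0 - y n) / (n : ℝ)) atTop (nhds L) →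
        Tendsto (fun n : ℕ => (z 0 - z n) / (n : ℝ)) atTop (nhds M) → L ≤ M) := by
  have hWc : Continuous W := hWC1.continuous
  refine ⟨?_, ?_, ?_⟩
  · intro T hT y hy
    exact exists_tendsto hWper hWc hγ hT hN ha haper hy
  · intro T hT y y' hy hy' L L' hL hL'
    exact le_antisymm (lim_le (key_ineq hWper hγ ha le_rfl hy hy') hL hL')
      (lim_le (key_ineq hWper hγ ha le_rfl hy' hy) hL' hL)
  · intro T S hT hTS y z hy hz L M hL hM
    exact lim_le (key_ineq hWper hγ ha hTS hy hz) hL hM
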